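/- Let (X,d) be a metric space, μ a Borel measure on X that is finite and positive on every bounded open set, x₀ ∈ X, N > 1 and A ∈ (0,∞). Assume: (i) the function ρ ↦ μ(B_ρ(x₀))/ρ^N is non-increasing on (0,∞); (ii) lim_{ρ→0⁺} μ(B_ρ(x₀))/(ω_N ρ^N) = A; (iii) for every λ > 0, 2λ ∫_X d(x₀,x)² e^{−2λ d(x₀,x)²} dμ ≥ (N/2) ∫_X e^{−2λ d(x₀,x)²} dμ. Then μ(B_ρ(x₀)) = A ω_N ρ^N for all ρ > 0, i.e. μ is an N-volume cone at x₀ with density A. -/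

import Mathlib

open MeasureTheory Set Filter

/-- `ω_N = π^{N/2} / Γ(N/2 + 1)`, the volume of the unit ball in dimension `N`. -/
noncomputable def omegaN (N : ℝ) : ℝ := Real.pi ^ (N / 2) / Real.Gamma (N / 2 + 1)

lemma aux_hasDeriv (b s : ℝ) :
    HasDerivAt (fun s : ℝ => -Real.exp (-2 * b * s ^ 2)) (4 * b * s * Real.exp (-2 * b * s ^ 2)) s := by
  have h1 : HasDerivAt (fun s : ℝ => -2 * b * s ^ 2) (-2 * b * (2 * s)) s := by
    simpa using ((hasDerivAt_pow 2 s).const_mul (-2 * b))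
  have := (h1.exp).neg
  exact this.congr_deriv (by ring)

lemma aux_exp_integrable (b : ℝ) (hb : 0 < b) (t : ℝ) :
    IntegrableOn (fun s : ℝ => 4 * b * s * Real.exp (-2 * b * s ^ 2)) (Ioi t) := by
  have : Integrable (fun s : ℝ => s * Real.exp (-(2 * b) * s ^ 2)) :=
    integrable_mul_exp_neg_mul_sq (by linarith)
  have h2 := (this.const_mul (4 * b)).integrableOn (s := Ioi t)
  refine h2.congr_fun (fun s _ => by ring_nf) measurableSet_Ioi

lemma aux_exp_eq_integral (b t : ℝ) (hb : 0 < b) :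
    ∫ s in Ioi t, 4 * b * s * Real.exp (-2 * b * s ^ 2) = Real.exp (-2 * b * t ^ 2) := by
  have := integral_Ioi_of_hasDerivAt_of_tendsto
    (f := fun s : ℝ => -Real.exp (-2 * b * s ^ 2))
    (f' := fun s => 4 * b * s * Real.exp (-2 * b * s ^ 2)) (a := t) (m := 0)
    ((aux_hasDeriv b t).continuousAt.continuousWithinAt)
    (fun x _ => aux_hasDeriv b x) (aux_exp_integrable b hb t) ?_
  · rw [this]; ring_nf
  · rw [show (0:ℝ) = -0 by ring]
    refine (Tendsto.neg ?_)
    have : Tendsto (fun s : ℝ => -2 * b * s ^ 2) atTop atBot := by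
      apply Tendsto.const_mul_atTop_of_neg (by linarith : -2 * b < 0)
      exact tendsto_pow_atTop (by norm_num)
    exact Real.tendsto_exp_atBot.comp this

lemma aux_layercake {X : Type*} [MetricSpace X] [MeasurableSpace X] [BorelSpace X]
    (μ : Measure X) [SFinite μ] (x₀ : X) (b : ℝ) (hb : 0 < b) :
    ∫⁻ x, ENNReal.ofReal (Real.exp (-2 * b * dist x₀ x ^ 2)) ∂μ
      = ∫⁻ s in Ioi 0, ENNReal.ofReal (4 * b * s * Real.exp (-2 * b * s ^ 2))
          * μ (Metric.ball x₀ s) := by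
  set h : ℝ → ℝ := fun s => 4 * b * s * Real.exp (-2 * b * s ^ 2) with hh
  have key : ∀ t : ℝ, 0 ≤ t → ENNReal.ofReal (Real.exp (-2 * b * t ^ 2))
      = ∫⁻ s in Ioi 0, (Ioi t).indicator (fun s => ENNReal.ofReal (h s)) s := by
    intro t ht
    rw [lintegral_indicator measurableSet_Ioi, Measure.restrict_restrict measurableSet_Ioi,
      Ioi_inter_Ioi, max_eq_left ht]
    rw [← aux_exp_eq_integral b t hb,
      ofReal_integral_eq_lintegral_ofReal (aux_exp_integrable b hb t) ?_]
    filter_upwards [ae_restrict_mem measurableSet_Ioi] with s hs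
    have : (0:ℝ) ≤ s := le_trans ht (le_of_lt hs)
    positivity
  calc ∫⁻ x, ENNReal.ofReal (Real.exp (-2 * b * dist x₀ x ^ 2)) ∂μ
      = ∫⁻ x, (∫⁻ s in Ioi 0, (Ioi (dist x₀ x)).indicator (fun s => ENNReal.ofReal (h s)) s) ∂μ := by
        refine lintegral_congr fun x => key _ dist_nonneg
    _ = ∫⁻ s in Ioi 0, (∫⁻ x, (Ioi (dist x₀ x)).indicator (fun s => ENNReal.ofReal (h s)) s ∂μ) := by
        refine lintegral_lintegral_swap ?_
        have hset : MeasurableSet {q : X × ℝ | dist x₀ q.1 < q.2} :=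
          (isOpen_lt (continuous_const.dist continuous_fst) continuous_snd).measurableSet
        have hm : Measurable fun q : X × ℝ =>
            {q : X × ℝ | dist x₀ q.1 < q.2}.indicator (fun q => ENNReal.ofReal (h q.2)) q := by
          refine Measurable.indicator ?_ hset
          exact (ENNReal.measurable_ofReal.comp (by fun_prop)).comp measurable_snd
        have heq : (Function.uncurry fun x s =>
            (Ioi (dist x₀ x)).indicator (fun s => ENNReal.ofReal (h s)) s)
            = fun q : X × ℝ =>
              {q : X × ℝ | dist x₀ q.1 < q.2}.indicator (fun q => ENNReal.ofReal (h q.2)) q := by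
          funext q
          by_cases hq : dist x₀ q.1 < q.2 <;>
            simp [Function.uncurry, Set.indicator, hq, Set.mem_Ioi]
        exact heq ▸ hm.aemeasurable
    _ = ∫⁻ s in Ioi 0, ENNReal.ofReal (h s) * μ (Metric.ball x₀ s) := by
        refine lintegral_congr fun s => ?_
        have : (fun x => (Ioi (dist x₀ x)).indicator (fun s => ENNReal.ofReal (h s)) s)
            = (Metric.ball x₀ s).indicator (fun _ => ENNReal.ofReal (h s)) := by
          ext x
          by_cases hx : dist x₀ x < s <;>
            simp [Set.indicator, Set.mem_Ioi, hx, Metric.mem_ball, dist_comm]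
        rw [this, lintegral_indicator Metric.isOpen_ball.measurableSet, setLIntegral_const]

set_option maxHeartbeats 2000000 in
/-- Under the generalized Bishop–Gromov inequality, a small-ball density `A` at `x₀`,
and the Gaussian integral inequality `2λ ∫ d² e^{-2λd²} dμ ≥ (N/2) ∫ e^{-2λd²} dμ`
for all `λ > 0`, the measure `μ` is an `N`-volume cone at `x₀` with density `A`. -/
theorem volume_cone_of_gaussian_inequality {X : Type*} [MetricSpace X]
    [MeasurableSpace X] [BorelSpace X] (μ : Measure X)
    (hμ : ∀ U : Set X, IsOpen U → Bornology.IsBounded U → U.Nonempty →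
      0 < μ U ∧ μ U ≠ ⊤)
    (x₀ : X) (N A : ℝ) (hN : 1 < N) (hA : 0 < A)
    (hBG : AntitoneOn (fun ρ => (μ (Metric.ball x₀ ρ)).toReal / ρ ^ N) (Ioi 0))
    (hlim : Tendsto (fun ρ => (μ (Metric.ball x₀ ρ)).toReal / (omegaN N * ρ ^ N))
      (nhdsWithin 0 (Ioi 0)) (nhds A))
    (hineq : ∀ lam > (0:ℝ),
      (N / 2) * ∫ x, Real.exp (-2 * lam * dist x₀ x ^ 2) ∂μ ≤
        2 * lam * ∫ x, dist x₀ x ^ 2 * Real.exp (-2 * lam * dist x₀ x ^ 2) ∂μ) :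
    ∀ ρ > (0:ℝ), μ (Metric.ball x₀ ρ) = ENNReal.ofReal (A * omegaN N * ρ ^ N) := by
  intro ρ hρ
  have hω : 0 < omegaN N := div_pos (Real.rpow_pos_of_pos Real.pi_pos _)
    (Real.Gamma_pos_of_pos (by linarith))
  set K := A * omegaN N with hK
  have hKpos : 0 < K := mul_pos hA hω
  have h_ball_ne : ∀ s : ℝ, μ (Metric.ball x₀ s) ≠ ⊤ := by
    intro s
    rcases le_or_gt s 0 with hs | hs
    · rw [Metric.ball_eq_empty.2 hs]; simp
    · exact (hμ _ Metric.isOpen_ball Metric.isBounded_ball ⟨x₀, Metric.mem_ball_self hs⟩).2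
  haveI : SigmaFinite μ := by
    refine Measure.sigmaFinite_of_countable (S := range fun n : ℕ => Metric.ball x₀ n)
      (countable_range _) ?_ ?_
    · rintro s ⟨n, rfl⟩
      exact lt_top_iff_ne_top.2 (h_ball_ne n)
    · apply eq_univ_of_forall
      intro x
      obtain ⟨n, hn⟩ := exists_nat_gt (dist x x₀)
      exact ⟨Metric.ball x₀ n, ⟨n, rfl⟩, by simpa [Metric.mem_ball] using hn⟩
  set g : ℝ → ℝ := fun s => (μ (Metric.ball x₀ s)).toReal with hgdef
  have hg_mono : Monotone g := fun s s' hss' =>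
    ENNReal.toReal_mono (h_ball_ne s') (measure_mono (Metric.ball_subset_ball hss'))
  have hg_nonneg : ∀ s, 0 ≤ g s := fun s => ENNReal.toReal_nonneg
  have hofReal : ∀ s, μ (Metric.ball x₀ s) = ENNReal.ofReal (g s) := fun s =>
    (ENNReal.ofReal_toReal (h_ball_ne s)).symm
  have hflim : Tendsto (fun ρ => g ρ / ρ ^ N) (nhdsWithin 0 (Ioi 0)) (nhds K) := by
    have h1 := hlim.const_mul (omegaN N)
    rw [mul_comm, ← hK] at h1
    refine Tendsto.congr' ?_ h1
    filter_upwards [self_mem_nhdsWithin] with s hs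
    have hs' : (0:ℝ) < s := hs
    have hsN : (0:ℝ) < s ^ N := Real.rpow_pos_of_pos hs' N
    field_simp
    simp only [hgdef]
  have hg_le : ∀ s ∈ Ioi (0:ℝ), g s ≤ K * s ^ N := by
    intro s hs
    have hs' : (0:ℝ) < s := hs
    have hsN : 0 < s ^ N := Real.rpow_pos_of_pos hs' N
    have hev : ∀ᶠ ρ in nhdsWithin 0 (Ioi 0), g s / s ^ N ≤ g ρ / ρ ^ N := by
      filter_upwards [Ioo_mem_nhdsGT_of_mem (show (0:ℝ) ∈ Ico (0:ℝ) s from ⟨le_refl _, hs'⟩)]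
        with ρ hρ
      exact hBG (mem_Ioi.2 hρ.1) hs hρ.2.le
    have hle := ge_of_tendsto hflim hev
    calc g s = g s / s ^ N * s ^ N := by field_simp
      _ ≤ K * s ^ N := mul_le_mul_of_nonneg_right hle hsN.le
  have hg_ge : ∀ ε : ℝ, 0 < ε → ∀ᶠ s in nhdsWithin 0 (Ioi 0), (K - ε) * s ^ N ≤ g s := by
    intro ε hε
    have h2 : ∀ᶠ s in nhdsWithin 0 (Ioi 0), K - ε < g s / s ^ N :=
      hflim.eventually (eventually_gt_nhds (by linarith))
    filter_upwards [h2, self_mem_nhdsWithin] with s hs1 hs2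
    have hs' : (0:ℝ) < s := hs2
    have hsN : 0 < s ^ N := Real.rpow_pos_of_pos hs' N
    calc (K - ε) * s ^ N ≤ g s / s ^ N * s ^ N := mul_le_mul_of_nonneg_right hs1.le hsN.le
      _ = g s := by field_simp
  have hdom : ∀ b : ℝ, 0 < b → IntegrableOn
      (fun s : ℝ => s ^ (N+1) * Real.exp (-2 * b * s ^ 2)) (Ioi 0) := by
    intro b hb
    have := integrableOn_rpow_mul_exp_neg_mul_sq (b := 2*b) (by linarith) (s := N+1) (by linarith)
    exact this.congr_fun (fun s _ => by ring_nf) measurableSet_Ioi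
  have hHG : ∀ b : ℝ, 0 < b → ∀ s ∈ Ioi (0:ℝ),
      4 * b * s * Real.exp (-2 * b * s ^ 2) * g s
        ≤ 4 * b * K * (s ^ (N+1) * Real.exp (-2 * b * s ^ 2)) := by
    intro b hb s hs
    have hs' : (0:ℝ) < s := hs
    have hh0 : 0 ≤ 4 * b * s * Real.exp (-2 * b * s ^ 2) := by positivity
    calc 4 * b * s * Real.exp (-2 * b * s ^ 2) * g s
        ≤ 4 * b * s * Real.exp (-2 * b * s ^ 2) * (K * s ^ N) :=
          mul_le_mul_of_nonneg_left (hg_le s hs) hh0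
      _ = 4 * b * K * (s ^ (N+1) * Real.exp (-2 * b * s ^ 2)) := by
          rw [Real.rpow_add_one hs'.ne']
          ring
  have hbundle : ∀ b : ℝ, 0 < b →
      Integrable (fun x => Real.exp (-2 * b * dist x₀ x ^ 2)) μ ∧
      IntegrableOn (fun s => 4 * b * s * Real.exp (-2 * b * s ^ 2) * g s) (Ioi 0) ∧
      (∫ x, Real.exp (-2 * b * dist x₀ x ^ 2) ∂μ)
        = ∫ s in Ioi 0, 4 * b * s * Real.exp (-2 * b * s ^ 2) * g s := by
    intro b hb
    have hcont : Continuous fun x : X => Real.exp (-2 * b * dist x₀ x ^ 2) := by fun_prop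
    have hmeas_h : Measurable fun s : ℝ => 4 * b * s * Real.exp (-2 * b * s ^ 2) := by fun_prop
    have hLC := aux_layercake μ x₀ b hb
    have hrw : (∫⁻ s in Ioi 0, ENNReal.ofReal (4 * b * s * Real.exp (-2 * b * s ^ 2))
          * μ (Metric.ball x₀ s))
        = ∫⁻ s in Ioi 0, ENNReal.ofReal (4 * b * s * Real.exp (-2 * b * s ^ 2) * g s) := by
      refine setLIntegral_congr_fun measurableSet_Ioi (fun s hs => ?_)
      have hs' : (0:ℝ) < s := hs
      rw [hofReal s, ← ENNReal.ofReal_mul (by positivity)]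
    have hfin : (∫⁻ s in Ioi 0, ENNReal.ofReal (4 * b * s * Real.exp (-2 * b * s ^ 2) * g s)) < ⊤ := by
      have hmono : (∫⁻ s in Ioi 0, ENNReal.ofReal (4 * b * s * Real.exp (-2 * b * s ^ 2) * g s))
          ≤ ∫⁻ s in Ioi 0, ENNReal.ofReal (4 * b * K * (s ^ (N+1) * Real.exp (-2 * b * s ^ 2))) := by
        refine setLIntegral_mono_ae ?_ (ae_of_all _ fun s hs => ?_)
        · fun_prop
        · exact ENNReal.ofReal_le_ofReal (hHG b hb s hs)
      refine lt_of_le_of_lt hmono ?_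
      rw [← ofReal_integral_eq_lintegral_ofReal ((hdom b hb).const_mul _) ?_]
      · exact ENNReal.ofReal_lt_top
      · filter_upwards [ae_restrict_mem measurableSet_Ioi] with s hs
        have hs' : (0:ℝ) < s := hs
        have h1 : (0:ℝ) ≤ s ^ (N+1) := Real.rpow_nonneg hs'.le _
        positivity
    have hint1 : Integrable (fun x => Real.exp (-2 * b * dist x₀ x ^ 2)) μ := by
      refine ⟨hcont.aestronglyMeasurable, ?_⟩
      rw [hasFiniteIntegral_iff_ofReal (ae_of_all _ fun x => (Real.exp_pos _).le)]
      rw [hLC, hrw]; exact hfin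
    have hint2 : IntegrableOn (fun s => 4 * b * s * Real.exp (-2 * b * s ^ 2) * g s) (Ioi 0) := by
      refine ⟨((hmeas_h.mul hg_mono.measurable)).aestronglyMeasurable, ?_⟩
      rw [hasFiniteIntegral_iff_ofReal ?_]
      · exact hfin
      · filter_upwards [ae_restrict_mem measurableSet_Ioi] with s hs
        have hs' : (0:ℝ) < s := hs
        exact mul_nonneg (by positivity) (hg_nonneg s)
    refine ⟨hint1, hint2, ?_⟩
    rw [integral_eq_lintegral_of_nonneg_ae (ae_of_all _ fun x => (Real.exp_pos _).le)
      hcont.aestronglyMeasurable,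
      integral_eq_lintegral_of_nonneg_ae ?_ hint2.1, hLC, hrw]
    filter_upwards [ae_restrict_mem measurableSet_Ioi] with s hs
    have hs' : (0:ℝ) < s := hs
    exact mul_nonneg (by positivity) (hg_nonneg s)
  have hbexp : ∀ b : ℝ, 0 < b → Integrable (fun x => Real.exp (-2 * b * dist x₀ x ^ 2)) μ :=
    fun b hb => (hbundle b hb).1
  have hint_sq : ∀ b : ℝ, 0 < b →
      Integrable (fun x => dist x₀ x ^ 2 * Real.exp (-2 * b * dist x₀ x ^ 2)) μ := by
    intro b hb
    have half := hbexp (b/2) (by linarith)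
    refine Integrable.mono' (half.const_mul (1/b)) ?_ (ae_of_all _ fun x => ?_)
    · apply Continuous.aestronglyMeasurable; fun_prop
    · have ht : (0:ℝ) ≤ dist x₀ x := dist_nonneg
      set t := dist x₀ x with htdef
      rw [Real.norm_eq_abs, abs_of_nonneg (by positivity)]
      have key : b * t ^ 2 * Real.exp (-(b * t ^ 2)) ≤ 1 := by
        have h1 := Real.add_one_le_exp (b * t ^ 2)
        rw [Real.exp_neg, mul_inv_le_iff₀ (Real.exp_pos _)]
        linarith
      have hE : Real.exp (-2 * b * t ^ 2) = Real.exp (-(b * t ^ 2)) * Real.exp (-(b * t ^ 2)) := by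
        rw [← Real.exp_add]; congr 1; ring
      have hE2 : Real.exp (-2 * (b/2) * t ^ 2) = Real.exp (-(b * t ^ 2)) := by congr 1; ring
      rw [hE, hE2]
      calc t ^ 2 * (Real.exp (-(b * t ^ 2)) * Real.exp (-(b * t ^ 2)))
          = (1/b) * (b * t ^ 2 * Real.exp (-(b * t ^ 2))) * Real.exp (-(b * t ^ 2)) := by
            field_simp
        _ ≤ (1/b) * 1 * Real.exp (-(b * t ^ 2)) := by
            have h2 : (0:ℝ) ≤ 1/b := by positivity
            have h3 := Real.exp_pos (-(b * t ^ 2))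
            exact mul_le_mul_of_nonneg_right (mul_le_mul_of_nonneg_left key h2) h3.le
        _ = 1 / b * Real.exp (-(b * t ^ 2)) := by ring
  have hGanti : ∀ b₁ b₂ : ℝ, 0 < b₁ → b₁ ≤ b₂ →
      b₂ ^ (N/2) * ∫ x, Real.exp (-2 * b₂ * dist x₀ x ^ 2) ∂μ
        ≤ b₁ ^ (N/2) * ∫ x, Real.exp (-2 * b₁ * dist x₀ x ^ 2) ∂μ := by
    intro b₁ b₂ hb₁ hb₁₂
    rcases eq_or_lt_of_le hb₁₂ with rfl | hlt
    · exact le_refl _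
    have hb₂ : 0 < b₂ := lt_trans hb₁ hlt
    set ν : Measure ℝ := volume.restrict (Ioc b₁ b₂) with hν
    haveI : IsFiniteMeasure ν := by
      constructor
      rw [hν, Measure.restrict_apply_univ]
      exact measure_Ioc_lt_top
    set φ : ℝ → X → ℝ := fun b x =>
      ((N/2) * b ^ (N/2 - 1) - 2 * dist x₀ x ^ 2 * b ^ (N/2))
        * Real.exp (-2 * b * dist x₀ x ^ 2) with hφ
    have hderiv : ∀ x : X, ∀ b ∈ Icc b₁ b₂,
        HasDerivAt (fun b : ℝ => b ^ (N/2) * Real.exp (-2 * b * dist x₀ x ^ 2)) (φ b x) b := by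
      intro x b hb
      have hbpos : 0 < b := lt_of_lt_of_le hb₁ hb.1
      have h1 : HasDerivAt (fun b : ℝ => b ^ (N/2)) ((N/2) * b ^ (N/2 - 1)) b :=
        Real.hasDerivAt_rpow_const (Or.inl hbpos.ne')
      have hlin : HasDerivAt (fun b : ℝ => -2 * b * dist x₀ x ^ 2) (-2 * dist x₀ x ^ 2) b := by
        have := ((hasDerivAt_id b).const_mul (-2)).mul_const (dist x₀ x ^ 2)
        simpa using this
      have h2 := hlin.exp
      have := h1.mul h2
      exact this.congr_deriv (by simp only [hφ]; ring)
    have hFTC : ∀ x : X, (∫ b in Ioc b₁ b₂, φ b x)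
        = b₂ ^ (N/2) * Real.exp (-2 * b₂ * dist x₀ x ^ 2)
          - b₁ ^ (N/2) * Real.exp (-2 * b₁ * dist x₀ x ^ 2) := by
      intro x
      have hmain : (∫ b in b₁..b₂, φ b x)
          = b₂ ^ (N/2) * Real.exp (-2 * b₂ * dist x₀ x ^ 2)
            - b₁ ^ (N/2) * Real.exp (-2 * b₁ * dist x₀ x ^ 2) := by
        refine intervalIntegral.integral_eq_sub_of_hasDerivAt
          (f := fun b : ℝ => b ^ (N/2) * Real.exp (-2 * b * dist x₀ x ^ 2)) ?_ ?_
        · intro b hb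
          rw [uIcc_of_le hb₁₂] at hb
          exact hderiv x b hb
        · apply ContinuousOn.intervalIntegrable
          rw [uIcc_of_le hb₁₂]
          have hne : ∀ b ∈ Icc b₁ b₂, b ≠ (0:ℝ) := fun b hb => (lt_of_lt_of_le hb₁ hb.1).ne'
          simp only [hφ]
          apply ContinuousOn.mul
          · apply ContinuousOn.sub
            · exact continuousOn_const.mul
                (ContinuousOn.rpow_const continuousOn_id (fun b hb => Or.inl (hne b hb)))
            · exact continuousOn_const.mul
                (ContinuousOn.rpow_const continuousOn_id (fun b hb => Or.inl (hne b hb)))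
          · exact (Real.continuous_exp.comp (by fun_prop)).continuousOn
      rw [intervalIntegral.integral_of_le hb₁₂] at hmain
      exact hmain
    -- dominating function
    set ψ : X → ℝ := fun x =>
      ((N/2) * (b₁ ^ (N/2-1) + b₂ ^ (N/2-1))) * Real.exp (-2 * b₁ * dist x₀ x ^ 2)
        + (2 * (b₁ ^ (N/2) + b₂ ^ (N/2)))
            * (dist x₀ x ^ 2 * Real.exp (-2 * b₁ * dist x₀ x ^ 2)) with hψ
    have hψint : Integrable ψ μ :=
      ((hbexp b₁ hb₁).const_mul _).add ((hint_sq b₁ hb₁).const_mul _)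
    have hrpow_bound : ∀ a : ℝ, ∀ b ∈ Icc b₁ b₂, b ^ a ≤ b₁ ^ a + b₂ ^ a := by
      intro a b hb
      have hbpos : 0 < b := lt_of_lt_of_le hb₁ hb.1
      rcases le_or_gt 0 a with ha | ha
      · have h1 : b ^ a ≤ b₂ ^ a := Real.rpow_le_rpow hbpos.le hb.2 ha
        have h2 : 0 ≤ b₁ ^ a := Real.rpow_nonneg hb₁.le a
        linarith
      · have h1 : b ^ a ≤ b₁ ^ a := Real.rpow_le_rpow_of_nonpos hb₁ hb.1 ha.le
        have h2 : 0 ≤ b₂ ^ a := Real.rpow_nonneg hb₂.le a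
        linarith
    have hbound : ∀ b ∈ Ioc b₁ b₂, ∀ x : X, |φ b x| ≤ ψ x := by
      intro b hb x
      have hbIcc : b ∈ Icc b₁ b₂ := ⟨hb.1.le, hb.2⟩
      have hbpos : 0 < b := lt_trans hb₁ hb.1
      have ht : (0:ℝ) ≤ dist x₀ x := dist_nonneg
      have hexp : Real.exp (-2 * b * dist x₀ x ^ 2) ≤ Real.exp (-2 * b₁ * dist x₀ x ^ 2) := by
        apply Real.exp_le_exp.2
        nlinarith [sq_nonneg (dist x₀ x), hb.1.le]
      have hnn1 : (0:ℝ) ≤ b ^ (N/2-1) := Real.rpow_nonneg hbpos.le _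
      have hnn2 : (0:ℝ) ≤ b ^ (N/2) := Real.rpow_nonneg hbpos.le _
      have hN2 : (0:ℝ) ≤ N/2 := by linarith
      have e1 : |φ b x| ≤ ((N/2) * b ^ (N/2-1) + 2 * dist x₀ x ^ 2 * b ^ (N/2))
          * Real.exp (-2 * b * dist x₀ x ^ 2) := by
        simp only [hφ, abs_mul, abs_of_pos (Real.exp_pos _)]
        apply mul_le_mul_of_nonneg_right _ (Real.exp_pos _).le
        refine le_trans (abs_sub _ _) ?_
        rw [abs_of_nonneg (by positivity), abs_of_nonneg (by positivity)]
      refine le_trans e1 ?_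
      have h2 : ((N/2) * b ^ (N/2-1) + 2 * dist x₀ x ^ 2 * b ^ (N/2))
          * Real.exp (-2 * b * dist x₀ x ^ 2)
          ≤ ((N/2) * (b₁ ^ (N/2-1) + b₂ ^ (N/2-1))
              + 2 * dist x₀ x ^ 2 * (b₁ ^ (N/2) + b₂ ^ (N/2)))
            * Real.exp (-2 * b₁ * dist x₀ x ^ 2) := by
        apply mul_le_mul _ hexp (Real.exp_pos _).le _
        · have i1 := hrpow_bound (N/2-1) b hbIcc
          have i2 := hrpow_bound (N/2) b hbIcc
          have j1 : (N/2) * b ^ (N/2-1) ≤ (N/2) * (b₁ ^ (N/2-1) + b₂ ^ (N/2-1)) :=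
            mul_le_mul_of_nonneg_left i1 hN2
          have j2 : 2 * dist x₀ x ^ 2 * b ^ (N/2)
              ≤ 2 * dist x₀ x ^ 2 * (b₁ ^ (N/2) + b₂ ^ (N/2)) :=
            mul_le_mul_of_nonneg_left i2 (by positivity)
          linarith
        · have k1 : (0:ℝ) ≤ b₁ ^ (N/2-1) := Real.rpow_nonneg hb₁.le _
          have k2 : (0:ℝ) ≤ b₂ ^ (N/2-1) := Real.rpow_nonneg hb₂.le _
          have k3 : (0:ℝ) ≤ b₁ ^ (N/2) := Real.rpow_nonneg hb₁.le _
          have k4 : (0:ℝ) ≤ b₂ ^ (N/2) := Real.rpow_nonneg hb₂.le _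
          positivity
      refine le_trans h2 ?_
      simp only [hψ]
      apply le_of_eq
      ring
    -- product integrability
    have hmeasφ : AEStronglyMeasurable (Function.uncurry fun (x : X) (b : ℝ) => φ b x)
        (μ.prod ν) := by
      have hm : Measurable fun z : X × ℝ =>
          ((N/2) * z.2 ^ (N/2 - 1) - 2 * dist x₀ z.1 ^ 2 * z.2 ^ (N/2))
            * Real.exp (-2 * z.2 * dist x₀ z.1 ^ 2) := by
        apply Measurable.mul
        · apply Measurable.sub
          · exact (measurable_const.mul (measurable_snd.pow_const _))
          · exact ((measurable_const.mul
              ((continuous_const.dist continuous_fst).measurable.pow_const 2)).mul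
              (measurable_snd.pow_const _))
        · exact (Real.continuous_exp.measurable.comp (by fun_prop))
      exact hm.aestronglyMeasurable
    have huncurry : Integrable (Function.uncurry fun (x : X) (b : ℝ) => φ b x) (μ.prod ν) := by
      refine Integrable.mono' (g := fun z : X × ℝ => ψ z.1 * 1)
        (Integrable.mul_prod hψint (integrable_const 1)) hmeasφ ?_
      have hprodres : μ.prod ν = (μ.prod volume).restrict (univ ×ˢ Ioc b₁ b₂) := by
        rw [hν, ← Measure.prod_restrict, Measure.restrict_univ]
      rw [hprodres]
      filter_upwards [ae_restrict_mem (MeasurableSet.univ.prod measurableSet_Ioc)] with z hz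
      simp only [mul_one]
      rw [Real.norm_eq_abs]
      exact hbound z.2 hz.2 z.1
    have hswap := integral_integral_swap huncurry
    have hL : (∫ x, (∫ b, φ b x ∂ν) ∂μ)
        = b₂ ^ (N/2) * (∫ x, Real.exp (-2 * b₂ * dist x₀ x ^ 2) ∂μ)
          - b₁ ^ (N/2) * ∫ x, Real.exp (-2 * b₁ * dist x₀ x ^ 2) ∂μ := by
      have h1 : (∫ x, (∫ b, φ b x ∂ν) ∂μ)
          = ∫ x, (b₂ ^ (N/2) * Real.exp (-2 * b₂ * dist x₀ x ^ 2)
              - b₁ ^ (N/2) * Real.exp (-2 * b₁ * dist x₀ x ^ 2)) ∂μ :=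
        integral_congr_ae (ae_of_all _ fun x => hFTC x)
      rw [h1]
      rw [integral_sub ((hbexp b₂ hb₂).const_mul _) ((hbexp b₁ hb₁).const_mul _),
        integral_const_mul, integral_const_mul]
    have hR : (∫ b, (∫ x, φ b x ∂μ) ∂ν) ≤ 0 := by
      rw [hν]
      refine setIntegral_nonpos_of_ae_restrict ((ae_restrict_iff' measurableSet_Ioc).2
        (ae_of_all _ fun b hb => ?_))
      have hbpos : 0 < b := lt_trans hb₁ hb.1
      show (∫ x, φ b x ∂μ) ≤ 0
      have hsplit : (∫ x, φ b x ∂μ)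
          = ((N/2) * b ^ (N/2-1)) * (∫ x, Real.exp (-2 * b * dist x₀ x ^ 2) ∂μ)
            - (2 * b ^ (N/2))
              * ∫ x, dist x₀ x ^ 2 * Real.exp (-2 * b * dist x₀ x ^ 2) ∂μ := by
        rw [← integral_const_mul, ← integral_const_mul,
          ← integral_sub (((hbexp b hbpos)).const_mul _) ((hint_sq b hbpos).const_mul _)]
        refine integral_congr_ae (ae_of_all _ fun x => ?_)
        simp only [hφ]
        ring
      rw [hsplit]
      have hkey := hineq b hbpos
      have hbfac : (0:ℝ) ≤ b ^ (N/2-1) := Real.rpow_nonneg hbpos.le _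
      have hbp : b ^ (N/2) = b ^ (N/2-1) * b := by
        rw [← Real.rpow_add_one hbpos.ne']
        norm_num
      rw [hbp]
      nlinarith [mul_le_mul_of_nonneg_left hkey hbfac]
    linarith [hswap, hL, hR]
  have hI₁int : IntegrableOn (fun u : ℝ => u ^ (N+1) * Real.exp (-2 * u ^ 2)) (Ioi 0) := by
    have h0 := integrableOn_rpow_mul_exp_neg_mul_sq (b := 2) (by norm_num) (s := N+1) (by linarith)
    exact h0.congr_fun (fun s _ => by ring_nf) measurableSet_Ioi
  set I₁ : ℝ := ∫ u in Ioi (0:ℝ), u ^ (N+1) * Real.exp (-2 * u ^ 2) with hI₁def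
  have hI₁nonneg : 0 ≤ I₁ := setIntegral_nonneg measurableSet_Ioi fun u hu => by
    have hu' : (0:ℝ) < u := hu
    positivity
  have hscale : ∀ b : ℝ, 0 < b →
      b ^ (N/2) * b * ∫ s in Ioi (0:ℝ), s ^ (N+1) * Real.exp (-2 * b * s ^ 2) = I₁ := by
    intro b hb
    have hsq : 0 < Real.sqrt b := Real.sqrt_pos.2 hb
    have hcomp := MeasureTheory.integral_comp_mul_left_Ioi
      (fun u => u ^ (N+1) * Real.exp (-2 * u ^ 2)) 0 hsq
    rw [mul_zero] at hcomp
    have hcongr : (∫ s in Ioi (0:ℝ),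
          (Real.sqrt b * s) ^ (N+1) * Real.exp (-2 * (Real.sqrt b * s) ^ 2))
        = ∫ s in Ioi (0:ℝ), Real.sqrt b ^ (N+1) * (s ^ (N+1) * Real.exp (-2 * b * s ^ 2)) := by
      refine setIntegral_congr_fun measurableSet_Ioi fun s hs => ?_
      have hs0 : (0:ℝ) < s := hs
      rw [Real.mul_rpow (Real.sqrt_nonneg b) hs0.le, mul_pow, Real.sq_sqrt hb.le]
      ring
    rw [hcongr, integral_const_mul, smul_eq_mul] at hcomp
    -- hcomp : √b^(N+1) * J = (√b)⁻¹ * I₁'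
    have hpow : b ^ (N/2) * b = Real.sqrt b ^ (N+1) * Real.sqrt b := by
      rw [← Real.rpow_add_one hsq.ne' (N+1), Real.sqrt_eq_rpow, ← Real.rpow_mul hb.le,
        show (1/2 : ℝ) * (N+1+1) = N/2 + 1 by ring, Real.rpow_add_one hb.ne']
    rw [hpow, hI₁def]
    calc Real.sqrt b ^ (N+1) * Real.sqrt b * ∫ s in Ioi (0:ℝ), s ^ (N+1) * Real.exp (-2 * b * s ^ 2)
        = Real.sqrt b * (Real.sqrt b ^ (N+1) * ∫ s in Ioi (0:ℝ), s ^ (N+1) * Real.exp (-2 * b * s ^ 2)) := by ring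
      _ = Real.sqrt b * ((Real.sqrt b)⁻¹ * ∫ u in Ioi (0:ℝ), u ^ (N+1) * Real.exp (-2 * u ^ 2)) := by rw [hcomp]
      _ = ∫ u in Ioi (0:ℝ), u ^ (N+1) * Real.exp (-2 * u ^ 2) := by
          field_simp
  have htail : ∀ δ : ℝ, 0 < δ →
      Tendsto (fun b : ℝ => b ^ (N/2) * b * ∫ s in Ioi δ, s ^ (N+1) * Real.exp (-2 * b * s ^ 2))
        atTop (nhds 0) := by
    intro δ hδ
    set C : ℝ := ∫ s in Ioi δ, s ^ (N+1) * Real.exp (-2 * s ^ 2) with hC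
    have hCint : IntegrableOn (fun s : ℝ => s ^ (N+1) * Real.exp (-2 * s ^ 2)) (Ioi δ) :=
      hI₁int.mono_set (Ioi_subset_Ioi hδ.le)
    have hCnn : 0 ≤ C := setIntegral_nonneg measurableSet_Ioi fun s hs => by
      have hs' : 0 < s := hδ.trans hs
      positivity
    have hbound : ∀ b : ℝ, 1 ≤ b → (∫ s in Ioi δ, s ^ (N+1) * Real.exp (-2 * b * s ^ 2))
        ≤ Real.exp (-2 * (b-1) * δ ^ 2) * C := by
      intro b hb1
      have hb : (0:ℝ) < b := lt_of_lt_of_le one_pos hb1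
      rw [hC, ← integral_const_mul]
      refine setIntegral_mono_on ((hdom b hb).mono_set (Ioi_subset_Ioi hδ.le))
        (hCint.const_mul _) measurableSet_Ioi fun s hs => ?_
      have hs' : δ < s := hs
      have hs0 : 0 < s := hδ.trans hs'
      have hexp : Real.exp (-2 * b * s ^ 2)
          ≤ Real.exp (-2 * (b-1) * δ ^ 2) * Real.exp (-2 * s ^ 2) := by
        rw [← Real.exp_add]
        apply Real.exp_le_exp.2
        nlinarith [mul_le_mul_of_nonneg_left (by nlinarith : δ^2 ≤ s^2) (by linarith : (0:ℝ) ≤ b-1)]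
      calc s ^ (N+1) * Real.exp (-2 * b * s ^ 2)
          ≤ s ^ (N+1) * (Real.exp (-2 * (b-1) * δ ^ 2) * Real.exp (-2 * s ^ 2)) :=
            mul_le_mul_of_nonneg_left hexp (Real.rpow_nonneg hs0.le _)
        _ = Real.exp (-2 * (b-1) * δ ^ 2) * (s ^ (N+1) * Real.exp (-2 * s ^ 2)) := by ring
    have hub : Tendsto (fun b : ℝ => b ^ (N/2) * b * (Real.exp (-2 * (b-1) * δ ^ 2) * C))
        atTop (nhds 0) := by
      have h0 := tendsto_rpow_mul_exp_neg_mul_atTop_nhds_zero (N/2+1) (2*δ^2) (by positivity)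
      have h1 := h0.const_mul (C * Real.exp (2*δ^2))
      rw [mul_zero] at h1
      refine h1.congr' ?_
      filter_upwards [eventually_gt_atTop 0] with b hb
      have e1 : Real.exp (-2 * (b-1) * δ ^ 2) = Real.exp (2*δ^2) * Real.exp (-(2*δ^2) * b) := by
        rw [← Real.exp_add]; congr 1; ring
      rw [e1, ← Real.rpow_add_one hb.ne' (N/2)]
      ring
    refine tendsto_of_tendsto_of_tendsto_of_le_of_le' tendsto_const_nhds hub ?_ ?_
    · filter_upwards [eventually_gt_atTop 0] with b hb
      have h2 : (0:ℝ) ≤ ∫ s in Ioi δ, s ^ (N+1) * Real.exp (-2 * b * s ^ 2) :=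
        setIntegral_nonneg measurableSet_Ioi fun s hs => by
          have hs' : 0 < s := hδ.trans hs
          positivity
      have h3 : (0:ℝ) ≤ b ^ (N/2) := Real.rpow_nonneg hb.le _
      positivity
    · filter_upwards [eventually_ge_atTop 1] with b hb
      have hbpos : (0:ℝ) < b := lt_of_lt_of_le one_pos hb
      have h3 : (0:ℝ) ≤ b ^ (N/2) * b := mul_nonneg (Real.rpow_nonneg hbpos.le _) hbpos.le
      exact mul_le_mul_of_nonneg_left (hbound b hb) h3
  have hlow : ∀ b₀ : ℝ, 0 < b₀ →
      4 * K * I₁ ≤ b₀ ^ (N/2) * ∫ x, Real.exp (-2 * b₀ * dist x₀ x ^ 2) ∂μ := by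
    intro b₀ hb₀
    have hclaim : ∀ ε : ℝ, 0 < ε → ε < K →
        4 * (K - ε) * I₁ ≤ b₀ ^ (N/2) * ∫ x, Real.exp (-2 * b₀ * dist x₀ x ^ 2) ∂μ := by
      intro ε hε hεK
      obtain ⟨u, hu, huP⟩ := mem_nhdsGT_iff_exists_Ioo_subset.1 (hg_ge ε hε)
      have hu' : (0:ℝ) < u := hu
      set δ := u/2 with hδdef
      have hδ : 0 < δ := by positivity
      have hδu : δ < u := by simp only [hδdef]; linarith
      have key : ∀ b : ℝ, max b₀ 1 ≤ b →
          4 * (K-ε) * (I₁ - b ^ (N/2) * b * ∫ s in Ioi δ, s ^ (N+1) * Real.exp (-2 * b * s ^ 2))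
            ≤ b₀ ^ (N/2) * ∫ x, Real.exp (-2 * b₀ * dist x₀ x ^ 2) ∂μ := by
        intro b hbge
        have hb : (0:ℝ) < b := lt_of_lt_of_le one_pos (le_trans (le_max_right _ _) hbge)
        have hmono := hGanti b₀ b hb₀ (le_trans (le_max_left _ _) hbge)
        have h2 : (K-ε) * (4*b) * (∫ s in Ioc 0 δ, s ^ (N+1) * Real.exp (-2 * b * s ^ 2))
            ≤ ∫ x, Real.exp (-2 * b * dist x₀ x ^ 2) ∂μ := by
          rw [(hbundle b hb).2.2, ← integral_const_mul]
          have step1 : (∫ s in Ioc 0 δ, (K-ε) * (4*b) * (s ^ (N+1) * Real.exp (-2 * b * s ^ 2)))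
              = ∫ s in Ioc 0 δ, 4 * b * s * Real.exp (-2 * b * s ^ 2) * ((K-ε) * s ^ N) := by
            refine setIntegral_congr_fun measurableSet_Ioc fun s hs => ?_
            rw [Real.rpow_add_one (ne_of_gt hs.1)]
            ring
          rw [step1]
          have step2 : (∫ s in Ioc 0 δ, 4 * b * s * Real.exp (-2 * b * s ^ 2) * ((K-ε) * s ^ N))
              ≤ ∫ s in Ioc 0 δ, 4 * b * s * Real.exp (-2 * b * s ^ 2) * g s := by
            have hintL : IntegrableOn
                (fun s : ℝ => 4 * b * s * Real.exp (-2 * b * s ^ 2) * ((K-ε) * s ^ N))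
                (Ioc 0 δ) := by
              refine IntegrableOn.congr_fun
                (((hdom b hb).mono_set Ioc_subset_Ioi_self).const_mul ((K-ε) * (4*b)))
                (fun s hs => ?_) measurableSet_Ioc
              rw [Real.rpow_add_one (ne_of_gt hs.1)]
              ring
            refine setIntegral_mono_on hintL
              ((hbundle b hb).2.1.mono_set Ioc_subset_Ioi_self) measurableSet_Ioc fun s hs => ?_
            have hsIoo : s ∈ Ioo 0 u := ⟨hs.1, lt_of_le_of_lt hs.2 hδu⟩
            have hle := huP hsIoo
            have hs1 : (0:ℝ) < s := hs.1
            have hpos : 0 ≤ 4 * b * s * Real.exp (-2 * b * s ^ 2) := by positivity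
            exact mul_le_mul_of_nonneg_left hle hpos
          refine le_trans step2 ?_
          refine setIntegral_mono_set (hbundle b hb).2.1 ?_
            (HasSubset.Subset.eventuallyLE Ioc_subset_Ioi_self)
          filter_upwards [ae_restrict_mem measurableSet_Ioi] with s hs
          have hs' : (0:ℝ) < s := hs
          exact mul_nonneg (by positivity) (hg_nonneg s)
        have h3 : (∫ s in Ioc 0 δ, s ^ (N+1) * Real.exp (-2 * b * s ^ 2))
            = (∫ s in Ioi (0:ℝ), s ^ (N+1) * Real.exp (-2 * b * s ^ 2))
              - ∫ s in Ioi δ, s ^ (N+1) * Real.exp (-2 * b * s ^ 2) := by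
          rw [eq_sub_iff_add_eq, ← setIntegral_union (Ioc_disjoint_Ioi le_rfl) measurableSet_Ioi
            ((hdom b hb).mono_set Ioc_subset_Ioi_self)
            ((hdom b hb).mono_set (Ioi_subset_Ioi hδ.le)), Ioc_union_Ioi_eq_Ioi hδ.le]
        have h4 : 4 * (K-ε) * (I₁ - b ^ (N/2) * b
              * ∫ s in Ioi δ, s ^ (N+1) * Real.exp (-2 * b * s ^ 2))
            = b ^ (N/2) * ((K-ε) * (4*b)
              * ∫ s in Ioc 0 δ, s ^ (N+1) * Real.exp (-2 * b * s ^ 2)) := by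
          rw [h3, ← hscale b hb]
          ring
        rw [h4]
        refine le_trans (mul_le_mul_of_nonneg_left h2 (Real.rpow_nonneg hb.le _)) hmono
      have hT := htail δ hδ
      have hlim2 : Tendsto (fun b : ℝ => 4 * (K-ε)
          * (I₁ - b ^ (N/2) * b * ∫ s in Ioi δ, s ^ (N+1) * Real.exp (-2 * b * s ^ 2)))
          atTop (nhds (4 * (K-ε) * (I₁ - 0))) :=
        (tendsto_const_nhds.sub hT).const_mul _
      rw [sub_zero] at hlim2
      exact le_of_tendsto hlim2 (eventually_atTop.2 ⟨max b₀ 1, key⟩)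
    by_contra hcon
    push_neg at hcon
    set Gb := b₀ ^ (N/2) * ∫ x, Real.exp (-2 * b₀ * dist x₀ x ^ 2) ∂μ with hGb
    have hDpos : 0 < 4*K*I₁ - Gb := by linarith
    set D := 4*K*I₁ - Gb with hD
    have h8 : (0:ℝ) < 8*I₁+1 := by linarith
    set ε := min (K/2) (D / (8*I₁+1)) with hεdef
    have hε : 0 < ε := lt_min (by linarith) (div_pos hDpos h8)
    have hεK : ε < K := lt_of_le_of_lt (min_le_left _ _) (by linarith)
    have hcl := hclaim ε hε hεK
    have hεD : ε ≤ D/(8*I₁+1) := min_le_right _ _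
    have h9 : 4*ε*I₁ ≤ 4*I₁*(D/(8*I₁+1)) := by nlinarith
    have h10 : 4*I₁*(D/(8*I₁+1)) < D := by
      have he : 4*I₁*(D/(8*I₁+1)) = (4*I₁/(8*I₁+1))*D := by ring
      have hfrac : 4*I₁/(8*I₁+1) < 1 := (div_lt_one h8).2 (by linarith)
      rw [he]
      nlinarith
    nlinarith [hcl]
  have hfinal : ∀ r : ℝ, 0 < r → g r = K * r ^ N := by
    intro r hr
    by_contra hne
    have hlt : g r < K * r ^ N := lt_of_le_of_ne (hg_le r hr) hne
    have hrN : 0 < r ^ N := Real.rpow_pos_of_pos hr N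
    set η := K - g r / r ^ N with hη
    have hηpos : 0 < η := by
      have h1 : g r / r ^ N < K := (div_lt_iff₀ hrN).2 (by linarith)
      simp only [hη]
      linarith
    have hub2 : ∀ s, r < s → g s ≤ (K - η) * s ^ N := by
      intro s hs
      have h5 := hBG (mem_Ioi.2 hr) (mem_Ioi.2 (hr.trans hs)) hs.le
      have hsN : 0 < s ^ N := Real.rpow_pos_of_pos (hr.trans hs) N
      have h6 : g s / s ^ N ≤ K - η := by
        have h7 : g s / s ^ N ≤ g r / r ^ N := h5
        have h8 : K - η = g r / r ^ N := by simp only [hη]; ring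
        rw [h8]; exact h7
      calc g s = g s / s ^ N * s ^ N := by field_simp
        _ ≤ (K - η) * s ^ N := mul_le_mul_of_nonneg_right h6 hsN.le
    set J := ∫ s in Ioi r, s ^ (N+1) * Real.exp (-2 * 1 * s ^ 2) with hJ
    have hJint : IntegrableOn (fun s : ℝ => s ^ (N+1) * Real.exp (-2 * 1 * s ^ 2)) (Ioi r) :=
      (hdom 1 one_pos).mono_set (Ioi_subset_Ioi hr.le)
    have hJpos : 0 < J := by
      rw [hJ]
      refine (setIntegral_pos_iff_support_of_nonneg_ae ?_ ?_).2 ?_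
      · filter_upwards [ae_restrict_mem measurableSet_Ioi] with s hs
        have hs' : 0 < s := hr.trans hs
        positivity
      · exact hJint
      · have hsub : Ioi r ⊆ (Function.support fun s : ℝ => s ^ (N+1) * Real.exp (-2 * 1 * s ^ 2))
            ∩ Ioi r := by
          intro s hs
          have hs' : 0 < s := hr.trans hs
          refine ⟨?_, hs⟩
          simp only [Function.mem_support]
          positivity
        refine lt_of_lt_of_le ?_ (measure_mono hsub)
        rw [Real.volume_Ioi]
        exact ENNReal.zero_lt_top
    have hJ0 : (∫ s in Ioi (0:ℝ), s ^ (N+1) * Real.exp (-2 * 1 * s ^ 2)) = I₁ := by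
      have := hscale 1 one_pos
      rwa [Real.one_rpow, one_mul, one_mul] at this
    have hF1 : (∫ x, Real.exp (-2 * 1 * dist x₀ x ^ 2) ∂μ) ≤ 4*K*I₁ - 4*η*J := by
      rw [(hbundle 1 one_pos).2.2]
      have hsplit1 : (∫ s in Ioi (0:ℝ), 4 * 1 * s * Real.exp (-2 * 1 * s ^ 2) * g s)
          = (∫ s in Ioc 0 r, 4 * 1 * s * Real.exp (-2 * 1 * s ^ 2) * g s)
            + ∫ s in Ioi r, 4 * 1 * s * Real.exp (-2 * 1 * s ^ 2) * g s := by
        rw [← setIntegral_union (Ioc_disjoint_Ioi le_rfl) measurableSet_Ioi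
          ((hbundle 1 one_pos).2.1.mono_set Ioc_subset_Ioi_self)
          ((hbundle 1 one_pos).2.1.mono_set (Ioi_subset_Ioi hr.le)),
          Ioc_union_Ioi_eq_Ioi hr.le]
      rw [hsplit1]
      have hpart1 : (∫ s in Ioc 0 r, 4 * 1 * s * Real.exp (-2 * 1 * s ^ 2) * g s)
          ≤ ∫ s in Ioc 0 r, 4 * 1 * K * (s ^ (N+1) * Real.exp (-2 * 1 * s ^ 2)) := by
        refine setIntegral_mono_on ((hbundle 1 one_pos).2.1.mono_set Ioc_subset_Ioi_self)
          (((hdom 1 one_pos).mono_set Ioc_subset_Ioi_self).const_mul _) measurableSet_Ioc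
          fun s hs => hHG 1 one_pos s hs.1
      have hpart2 : (∫ s in Ioi r, 4 * 1 * s * Real.exp (-2 * 1 * s ^ 2) * g s)
          ≤ ∫ s in Ioi r, 4 * 1 * (K - η) * (s ^ (N+1) * Real.exp (-2 * 1 * s ^ 2)) := by
        refine setIntegral_mono_on ((hbundle 1 one_pos).2.1.mono_set (Ioi_subset_Ioi hr.le))
          (((hdom 1 one_pos).mono_set (Ioi_subset_Ioi hr.le)).const_mul _) measurableSet_Ioi
          fun s hs => ?_
        have hs0 : (0:ℝ) < s := hr.trans hs
        have h6 := hub2 s hs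
        have hpos : 0 ≤ 4 * 1 * s * Real.exp (-2 * 1 * s ^ 2) := by positivity
        calc 4 * 1 * s * Real.exp (-2 * 1 * s ^ 2) * g s
            ≤ 4 * 1 * s * Real.exp (-2 * 1 * s ^ 2) * ((K - η) * s ^ N) :=
              mul_le_mul_of_nonneg_left h6 hpos
          _ = 4 * 1 * (K - η) * (s ^ (N+1) * Real.exp (-2 * 1 * s ^ 2)) := by
              rw [Real.rpow_add_one hs0.ne']
              ring
      have hQc : (∫ s in Ioc 0 r, s ^ (N+1) * Real.exp (-2 * 1 * s ^ 2))
          = (∫ s in Ioi (0:ℝ), s ^ (N+1) * Real.exp (-2 * 1 * s ^ 2)) - J := by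
        rw [hJ, eq_sub_iff_add_eq, ← setIntegral_union (Ioc_disjoint_Ioi le_rfl) measurableSet_Ioi
          ((hdom 1 one_pos).mono_set Ioc_subset_Ioi_self)
          ((hdom 1 one_pos).mono_set (Ioi_subset_Ioi hr.le)), Ioc_union_Ioi_eq_Ioi hr.le]
      calc (∫ s in Ioc 0 r, 4 * 1 * s * Real.exp (-2 * 1 * s ^ 2) * g s)
            + ∫ s in Ioi r, 4 * 1 * s * Real.exp (-2 * 1 * s ^ 2) * g s
          ≤ (∫ s in Ioc 0 r, 4 * 1 * K * (s ^ (N+1) * Real.exp (-2 * 1 * s ^ 2)))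
            + ∫ s in Ioi r, 4 * 1 * (K - η) * (s ^ (N+1) * Real.exp (-2 * 1 * s ^ 2)) :=
            add_le_add hpart1 hpart2
        _ = (4 * 1 * K) * (∫ s in Ioc 0 r, s ^ (N+1) * Real.exp (-2 * 1 * s ^ 2))
            + (4 * 1 * (K - η)) * J := by
            rw [integral_const_mul, integral_const_mul, hJ]
        _ = 4*K*I₁ - 4*η*J := by
            rw [hQc, hJ0]
            ring
    have hlow1 := hlow 1 one_pos
    rw [Real.one_rpow, one_mul] at hlow1
    nlinarith [hJpos, hηpos, hF1, hlow1]
  rw [hofReal ρ, hfinal ρ hρ]
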